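/- Let ξ and η be real numbers with ξ + ‖γ‖ > 0, η + ‖γ‖ > 0, and ξ + η + ‖γ‖ < 0. Then for every x ∈ ℝⁿ the integral K(x,ξ,η) = ∫_{ℝⁿ} ρ(x−y)^ξ (1+ρ(y))^η dy is finite and satisfies K(x,ξ,η) ≤ C(ξ,η,ℓ̲) (1+ρ(x))^{ξ+η+‖γ‖}, with C(ξ,η,ℓ̲) independent of x. -/

import Mathlib

open MeasureTheory Real Set
open scoped ENNReal

set_option linter.unusedVariables false

noncomputable section

namespace Semielliptic

/-- `σ(x) = Σ_k x_k^{2ℓ_k}` -/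
def sig {n : ℕ} (l : Fin n → ℕ) (x : Fin n → ℝ) : ℝ := ∑ k, x k ^ (2 * l k)

/-- `ℓ = max_k ℓ_k` -/
def lmax {n : ℕ} (l : Fin n → ℕ) : ℕ := Finset.univ.sup l

/-- the anisotropic length `ρ(x) = σ(x)^{1/(2ℓ)}` -/
def rho {n : ℕ} (l : Fin n → ℕ) (x : Fin n → ℝ) : ℝ :=
  sig l x ^ ((1 : ℝ) / (2 * (lmax l : ℝ)))

/-- `γ_k = ℓ/ℓ_k` -/
def gam {n : ℕ} (l : Fin n → ℕ) (k : Fin n) : ℝ := (lmax l : ℝ) / (l k : ℝ)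

/-- `‖γ‖ = Σ_k γ_k` -/
def gnorm {n : ℕ} (l : Fin n → ℕ) : ℝ := ∑ k, gam l k

/-- `α·γ = Σ_k α_k γ_k` -/
def dotg {n : ℕ} (l : Fin n → ℕ) (a : Fin n → ℕ) : ℝ := ∑ k, (a k : ℝ) * gam l k

/-- the partial derivative in the k-th coordinate direction -/
def pd {n : ℕ} {E : Type*} [NormedAddCommGroup E] [NormedSpace ℝ E] (k : Fin n)
    (f : (Fin n → ℝ) → E) : (Fin n → ℝ) → E :=
  fun x => fderiv ℝ f x (Pi.single k 1)

/-- the multi-index partial derivative `∂^α` -/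
def pdM {n : ℕ} {E : Type*} [NormedAddCommGroup E] [NormedSpace ℝ E] (a : Fin n → ℕ)
    (f : (Fin n → ℝ) → E) : (Fin n → ℝ) → E :=
  Fin.foldr n (fun k g => (pd k)^[a k] g) f

/-- the symbol `L(x) = Σ_{α·γ=ℓ} A_α (ix)^α` -/
def symb {n m : ℕ} {ι : Type} [Fintype ι] (l : Fin n → ℕ)
    (A : ι → Matrix (Fin m) (Fin m) ℂ) (mi : ι → Fin n → ℕ)
    (x : Fin n → ℝ) : Matrix (Fin m) (Fin m) ℂ :=
  ∑ i, (∏ k, (Complex.I * (x k : ℂ)) ^ (mi i k)) • A i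

/-- the Frobenius (Hilbert–Schmidt) norm of a matrix -/
def fro {m : ℕ} (M : Matrix (Fin m) (Fin m) ℂ) : ℝ :=
  Real.sqrt (∑ i, ∑ j, ‖M i j‖ ^ 2)

/-- the integrand `e^{ix·z}(iz)^β σ(z) e^{-tσ(z)} L(z)⁻¹` -/
def jker {n m : ℕ} {ι : Type} [Fintype ι] (l : Fin n → ℕ)
    (A : ι → Matrix (Fin m) (Fin m) ℂ) (mi : ι → Fin n → ℕ)
    (b : Fin n → ℕ) (x : Fin n → ℝ) (t : ℝ) (z : Fin n → ℝ) : Matrix (Fin m) (Fin m) ℂ :=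
  (Complex.exp (Complex.I * ((∑ k, x k * z k : ℝ) : ℂ)) *
      (∏ k, (Complex.I * (z k : ℂ)) ^ (b k)) *
      ((sig l z : ℝ) : ℂ) * ((Real.exp (-(t * sig l z)) : ℝ) : ℂ)) • (symb l A mi z)⁻¹

/-- `J_β(x,t) = ∫_{ℝⁿ} e^{ix·z}(iz)^β σ(z) e^{-tσ(z)} L(z)⁻¹ dz`, computed entrywise -/
def Jmat {n m : ℕ} {ι : Type} [Fintype ι] (l : Fin n → ℕ)
    (A : ι → Matrix (Fin m) (Fin m) ℂ) (mi : ι → Fin n → ℕ)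
    (b : Fin n → ℕ) (x : Fin n → ℝ) (t : ℝ) : Matrix (Fin m) (Fin m) ℂ :=
  Matrix.of fun i j => ∫ z : Fin n → ℝ, jker l A mi b x t z i j

/-- `F_β(x) = (2π)^{-n} ∫_0^∞ J_β(x,t) dt`, computed entrywise -/
def Fmat {n m : ℕ} {ι : Type} [Fintype ι] (l : Fin n → ℕ)
    (A : ι → Matrix (Fin m) (Fin m) ℂ) (mi : ι → Fin n → ℕ)
    (b : Fin n → ℕ) (x : Fin n → ℝ) : Matrix (Fin m) (Fin m) ℂ :=
  Matrix.of fun i j =>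
    ((((2 * Real.pi) ^ n)⁻¹ : ℝ) : ℂ) * ∫ t in Ioi (0 : ℝ), Jmat l A mi b x t i j

/-- `v` is the weak derivative `∂^α u`: tested against scalar test functions. -/
def IsWeakDeriv {n m : ℕ} (a : Fin n → ℕ) (u v : (Fin n → ℝ) → Fin m → ℂ) : Prop :=
  ∀ φ : (Fin n → ℝ) → ℝ, ContDiff ℝ (⊤ : ℕ∞) φ → HasCompactSupport φ →
    ∫ x : Fin n → ℝ, pdM a φ x • u x
      = ((-1 : ℝ) ^ (∑ k, a k)) • ∫ x : Fin n → ℝ, φ x • v x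

open Classical in
/-- the (finite) set of multi-indices with `α·γ ≤ r` -/
def idxSet {n : ℕ} (l : Fin n → ℕ) (r : ℝ) : Finset (Fin n → ℕ) :=
  (Finset.image (fun f : Fin n → Fin (⌈r⌉₊ + 1) => fun k => (f k : ℕ)) Finset.univ).filter
    (fun a => dotg l a ≤ r)

/-- `𝓛u = Σ_{α·γ=ℓ} A_α ∂^α u`, computed from the given family of (weak) derivatives of `u` -/
def Lop {n m : ℕ} {ι : Type} [Fintype ι] (A : ι → Matrix (Fin m) (Fin m) ℂ)
    (mi : ι → Fin n → ℕ) (du : (Fin n → ℕ) → (Fin n → ℝ) → Fin m → ℂ)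
    (x : Fin n → ℝ) : Fin m → ℂ :=
  ∑ i, (A i).mulVec (du (mi i) x)

/-- `𝓛φ` for smooth `φ` (classical derivatives) -/
def LopC {n m : ℕ} {ι : Type} [Fintype ι] (A : ι → Matrix (Fin m) (Fin m) ℂ)
    (mi : ι → Fin n → ℕ) (φ : (Fin n → ℝ) → Fin m → ℂ) (x : Fin n → ℝ) : Fin m → ℂ :=
  ∑ i, (A i).mulVec (pdM (mi i) φ x)

/-- the formal adjoint `𝓛*φ = Σ (-1)^{|α|} A_α* ∂^α φ` on smooth functions -/
def LopAdj {n m : ℕ} {ι : Type} [Fintype ι] (A : ι → Matrix (Fin m) (Fin m) ℂ)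
    (mi : ι → Fin n → ℕ) (φ : (Fin n → ℝ) → Fin m → ℂ) (x : Fin n → ℝ) : Fin m → ℂ :=
  ∑ i, ((-1 : ℂ) ^ (∑ k, mi i k)) • (A i).conjTranspose.mulVec (pdM (mi i) φ x)

/-- the pairing `u·v = v* u` in `ℂ^m` -/
def pairc {m : ℕ} (u v : Fin m → ℂ) : ℂ := ∑ j, u j * (starRingEnd ℂ) (v j)

open scoped NNReal
section
variable {n : ℕ} (l : Fin n → ℕ)

lemma sig_nonneg (x : Fin n → ℝ) : 0 ≤ sig l x :=
  Finset.sum_nonneg fun k _ => (even_two_mul (l k)).pow_nonneg _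
lemma rho_nonneg (x : Fin n → ℝ) : 0 ≤ rho l x := Real.rpow_nonneg (sig_nonneg l x) _
lemma measurable_sig : Measurable (sig l) := by unfold sig; fun_prop
lemma measurable_rho : Measurable (rho l) := (measurable_sig l).pow measurable_const

variable (hn : 0 < n) (hl : ∀ k, 0 < l k)

include hn hl in
lemma lmax_pos : 0 < lmax l :=
  lt_of_lt_of_le (hl ⟨0, hn⟩) (Finset.le_sup (Finset.mem_univ _))

include hn hl in
lemma sig_le_one_of_rho {y : Fin n → ℝ} (hy : rho l y ≤ 1) : sig l y ≤ 1 := by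
  have hL : (0:ℝ) < (lmax l : ℝ) := by exact_mod_cast lmax_pos l hn hl
  have h1 : sig l y = rho l y ^ (2 * (lmax l : ℝ)) := by
    rw [rho, ← Real.rpow_mul (sig_nonneg l y), one_div_mul_cancel (by positivity),
      Real.rpow_one]
  rw [h1]
  exact Real.rpow_le_one (rho_nonneg l y) hy (by positivity)

include hn hl in
lemma ball_subset_box : {y : Fin n → ℝ | rho l y ≤ 1} ⊆ univ.pi fun _ => Icc (-1:ℝ) 1 := by
  intro y hy k _
  have hσ : sig l y ≤ 1 := sig_le_one_of_rho l hn hl hy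
  have hterm : y k ^ (2 * l k) ≤ 1 := by
    exact le_trans (Finset.single_le_sum (f := fun j => y j ^ (2 * l j))
      (fun j _ => (even_two_mul (l j)).pow_nonneg _) (Finset.mem_univ k)) hσ
  have habs : |y k| ≤ 1 := by
    rw [← (even_two_mul (l k)).pow_abs] at hterm
    exact (pow_le_one_iff_of_nonneg (abs_nonneg _) (by have := hl k; omega)).1 hterm
  exact abs_le.1 habs

include hn hl in
lemma meas_ball_ne_top : volume {y : Fin n → ℝ | rho l y ≤ 1} ≠ ⊤ := by
  refine ne_top_of_le_ne_top ?_ (measure_mono (ball_subset_box l hn hl))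
  rw [volume_pi_pi]
  exact (ENNReal.prod_lt_top fun k _ => by
    rw [Real.volume_Icc]; exact ENNReal.ofReal_lt_top).ne

end

section
variable {n : ℕ} (l : Fin n → ℕ)

def dil (t : ℝ) : (Fin n → ℝ) →ₗ[ℝ] (Fin n → ℝ) :=
  Matrix.toLin' (Matrix.diagonal fun k => t ^ gam l k)

lemma dil_apply (t : ℝ) (x : Fin n → ℝ) (k : Fin n) :
    dil l t x k = t ^ gam l k * x k := by
  simp [dil, Matrix.toLin'_apply, Matrix.mulVec_diagonal]

lemma dil_det (t : ℝ) (ht : 0 < t) : LinearMap.det (dil l t) = t ^ gnorm l := by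
  rw [dil, LinearMap.det_toLin', Matrix.det_diagonal, gnorm, Real.rpow_sum_of_pos ht]

variable (hn : 0 < n) (hl : ∀ k, 0 < l k)

include hn hl in
lemma sig_dil (t : ℝ) (ht : 0 < t) (x : Fin n → ℝ) :
    sig l (dil l t x) = t ^ (2 * (lmax l : ℝ)) * sig l x := by
  unfold sig
  rw [Finset.mul_sum]
  refine Finset.sum_congr rfl fun k _ => ?_
  rw [dil_apply, mul_pow, ← Real.rpow_natCast (t ^ gam l k) (2 * l k),
    ← Real.rpow_mul ht.le]
  congr 2
  have hlk : (l k : ℝ) ≠ 0 := by exact_mod_cast (hl k).ne'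
  rw [gam]
  push_cast
  field_simp

include hn hl in
lemma rho_dil (t : ℝ) (ht : 0 < t) (x : Fin n → ℝ) :
    rho l (dil l t x) = t * rho l x := by
  have hL : (0:ℝ) < (lmax l : ℝ) := by exact_mod_cast lmax_pos l hn hl
  rw [rho, sig_dil l hn hl t ht, Real.mul_rpow (by positivity) (sig_nonneg l x),
    ← Real.rpow_mul ht.le, mul_one_div, div_self (by positivity), Real.rpow_one, rho]

include hn hl in
lemma ball_eq_image (r : ℝ) (hr : 0 < r) :
    {y : Fin n → ℝ | rho l y ≤ r} = (dil l r) '' {y | rho l y ≤ 1} := by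
  ext y
  simp only [mem_setOf_eq, mem_image]
  constructor
  · intro hy
    refine ⟨dil l r⁻¹ y, ?_, ?_⟩
    · rw [rho_dil l hn hl r⁻¹ (by positivity) y, inv_mul_le_iff₀ hr, mul_one]
      exact hy
    · funext k
      rw [dil_apply, dil_apply, ← mul_assoc, ← Real.mul_rpow hr.le (by positivity),
        mul_inv_cancel₀ hr.ne', Real.one_rpow, one_mul]
  · rintro ⟨z, hz, rfl⟩
    rw [rho_dil l hn hl r hr]
    calc r * rho l z ≤ r * 1 := mul_le_mul_of_nonneg_left hz hr.le
      _ = r := mul_one r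

/-- the normalizing constant -/
def cball : ℝ := (volume {y : Fin n → ℝ | rho l y ≤ 1}).toReal

lemma cball_nonneg : 0 ≤ cball l := ENNReal.toReal_nonneg

include hn hl in
lemma meas_ball (r : ℝ) (hr : 0 < r) :
    volume {y : Fin n → ℝ | rho l y ≤ r}
      = ENNReal.ofReal (cball l * r ^ gnorm l) := by
  rw [ball_eq_image l hn hl r hr, Measure.addHaar_image_linearMap, dil_det l r hr,
    abs_of_nonneg (Real.rpow_nonneg hr.le _)]
  rw [← ENNReal.ofReal_toReal (meas_ball_ne_top l hn hl)]
  rw [← ENNReal.ofReal_mul (Real.rpow_nonneg hr.le _)]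
  rw [mul_comm]
  rfl

end

section
variable {n : ℕ} (l : Fin n → ℕ) (hn : 0 < n) (hl : ∀ k, 0 < l k)

include hn in
lemma vol_zero_singleton : volume ({0} : Set (Fin n → ℝ)) = 0 := by
  have h : ({0} : Set (Fin n → ℝ)) = univ.pi fun _ => ({0} : Set ℝ) := by
    ext z
    simp [funext_iff]
  rw [h, volume_pi_pi]
  simp only [Real.volume_singleton]
  rw [Finset.prod_const, zero_pow]
  simp [Finset.card_univ]
  omega

include hn hl in
lemma sig_eq_zero_iff (x : Fin n → ℝ) : sig l x = 0 ↔ x = 0 := by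
  constructor
  · intro h
    funext k
    have h2 := (Finset.sum_eq_zero_iff_of_nonneg
      (fun k _ => (even_two_mul (l k)).pow_nonneg _)).1 h k (Finset.mem_univ k)
    have := pow_eq_zero_iff (n := 2 * l k) (by have := hl k; omega) |>.1 h2
    simpa using this
  · rintro rfl
    simp [sig, zero_pow, (by have := hl ·; omega : ∀ k, 2 * l k ≠ 0)]
    exact Finset.sum_eq_zero fun k _ => zero_pow (by have := hl k; omega)

include hn hl in
lemma rho_eq_zero_iff (x : Fin n → ℝ) : rho l x = 0 ↔ x = 0 := by
  rw [rho, Real.rpow_eq_zero (sig_nonneg l x), sig_eq_zero_iff l hn hl]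
  have : (0:ℕ) < lmax l := lmax_pos l hn hl
  have : (0:ℝ) < (lmax l : ℝ) := by exact_mod_cast this
  positivity

include hn hl in
lemma rho_pos_of_ne {x : Fin n → ℝ} (hx : x ≠ 0) : 0 < rho l x :=
  lt_of_le_of_ne (rho_nonneg l x) fun h => hx ((rho_eq_zero_iff l hn hl x).1 h.symm)

lemma measurableSet_ball (r : ℝ) : MeasurableSet {y : Fin n → ℝ | rho l y ≤ r} :=
  measurableSet_le (measurable_rho l) measurable_const

include hn hl in
lemma lint_ball (θ : ℝ) (hθ : θ < 0) (hθg : 0 < θ + gnorm l) :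
    ∃ C : ℝ, 0 ≤ C ∧ ∀ R : ℝ, 0 < R →
      ∫⁻ y in {y : Fin n → ℝ | rho l y ≤ R}, ENNReal.ofReal (rho l y ^ θ)
        ≤ ENNReal.ofReal (C * R ^ (θ + gnorm l)) := by
  classical
  set g := gnorm l with hg
  set c : ℝ := 2⁻¹ with hc
  have hc0 : (0:ℝ) < c := by norm_num
  have hc1 : c < 1 := by norm_num
  set q : ℝ := c ^ (θ + g) with hq
  have hq0 : 0 < q := Real.rpow_pos_of_pos hc0 _
  have hq1 : q < 1 := Real.rpow_lt_one hc0.le hc1 hθg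
  have hA0 : 0 ≤ cball l * c ^ θ := mul_nonneg (cball_nonneg l) (Real.rpow_nonneg hc0.le _)
  refine ⟨cball l * c ^ θ * (1 - q)⁻¹,
    mul_nonneg hA0 (inv_nonneg.2 (by linarith)), fun R hR => ?_⟩
  set f : (Fin n → ℝ) → ℝ≥0∞ := fun y => ENNReal.ofReal (rho l y ^ θ) with hf
  set u : ℕ → ℝ := fun j => R * c ^ j with hu
  have hu0 : ∀ j, 0 < u j := fun j => by positivity
  set S : ℕ → Set (Fin n → ℝ) := fun j => {y | u (j+1) < rho l y ∧ rho l y ≤ u j} with hS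
  have hcover : {y : Fin n → ℝ | rho l y ≤ R} ⊆ {0} ∪ ⋃ j, S j := by
    intro y hy
    rcases eq_or_ne y 0 with rfl | hy0
    · exact Or.inl rfl
    · right
      have hρ : 0 < rho l y := rho_pos_of_ne l hn hl hy0
      have hyR : rho l y ≤ R := hy
      have hex : ∃ j : ℕ, c ^ (j+1) < rho l y / R := by
        obtain ⟨m, hm⟩ := exists_pow_lt_of_lt_one (div_pos hρ hR) hc1
        rcases m with - | m'
        · exfalso
          simp only [pow_zero] at hm
          have : rho l y / R ≤ 1 := div_le_one_of_le₀ hyR hR.le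
          linarith
        · exact ⟨m', hm⟩
      set j := Nat.find hex with hj
      have hjP : c ^ (j+1) < rho l y / R := Nat.find_spec hex
      refine mem_iUnion.2 ⟨j, ?_, ?_⟩
      · rw [hu]
        calc R * c ^ (j+1) < R * (rho l y / R) := by
              exact mul_lt_mul_of_pos_left hjP hR
          _ = rho l y := by field_simp
      · rcases Nat.eq_zero_or_pos j with hj0 | hjpos
        · simp only [hj0, hu, pow_zero, mul_one]
          exact hyR
        · obtain ⟨j', hj'⟩ := Nat.exists_eq_add_of_lt hjpos
          have hnot := Nat.find_min hex (m := j') (by omega)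
          push_neg at hnot
          rw [div_le_iff₀ hR] at hnot
          rw [hj']
          simpa [hu, mul_comm] using hnot
  have hSm : ∀ j, MeasurableSet (S j) := fun j =>
    (measurableSet_lt measurable_const (measurable_rho l)).inter
      (measurableSet_le (measurable_rho l) measurable_const)
  have hpiece : ∀ j, ∫⁻ y in S j, f y ∂volume
      ≤ ENNReal.ofReal (cball l * c ^ θ * R ^ (θ + g)) * ENNReal.ofReal q ^ j := by
    intro j
    have h1 : ∫⁻ y in S j, f y ∂volume ≤ ∫⁻ _ in S j, ENNReal.ofReal (u (j+1) ^ θ) ∂volume := by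
      refine setLIntegral_mono' (hSm j) fun y hy => ?_
      exact ENNReal.ofReal_le_ofReal
        (Real.rpow_le_rpow_of_nonpos (hu0 (j+1)) hy.1.le hθ.le)
    rw [setLIntegral_const] at h1
    have h2 : volume (S j) ≤ ENNReal.ofReal (cball l * u j ^ g) := by
      rw [← meas_ball l hn hl (u j) (hu0 j)]
      exact measure_mono fun y hy => hy.2
    calc ∫⁻ y in S j, f y ∂volume ≤ ENNReal.ofReal (u (j+1) ^ θ) * ENNReal.ofReal (cball l * u j ^ g) :=
          le_trans h1 (mul_le_mul_right h2 _)
      _ = ENNReal.ofReal (u (j+1) ^ θ * (cball l * u j ^ g)) := by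
          rw [← ENNReal.ofReal_mul (Real.rpow_nonneg (hu0 (j+1)).le _)]
      _ = ENNReal.ofReal (cball l * c ^ θ * R ^ (θ + g)) * ENNReal.ofReal q ^ j := by
          rw [← ENNReal.ofReal_pow hq0.le,
            ← ENNReal.ofReal_mul (mul_nonneg hA0 (Real.rpow_nonneg hR.le _))]
          congr 1
          have e1 : u (j+1) ^ θ = R ^ θ * (c ^ θ * c ^ (θ * (j:ℝ))) := by
            show (R * c ^ (j+1)) ^ θ = _
            rw [Real.mul_rpow hR.le (by positivity), ← Real.rpow_natCast c (j+1),
              ← Real.rpow_mul hc0.le,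
              show ((j+1 : ℕ) : ℝ) * θ = θ + θ * (j:ℝ) by push_cast; ring,
              Real.rpow_add hc0]
          have e2 : u j ^ g = R ^ g * c ^ (g * (j:ℝ)) := by
            show (R * c ^ j) ^ g = _
            rw [Real.mul_rpow hR.le (by positivity), ← Real.rpow_natCast c j,
              ← Real.rpow_mul hc0.le, mul_comm (j:ℝ) g]
          have e3 : q ^ j = c ^ (θ * (j:ℝ)) * c ^ (g * (j:ℝ)) := by
            show (c ^ (θ + g)) ^ j = _
            rw [← Real.rpow_natCast (c ^ (θ + g)) j, ← Real.rpow_mul hc0.le, add_mul,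
              Real.rpow_add hc0]
          rw [e1, e2, e3, Real.rpow_add hR]
          ring
  calc ∫⁻ y in {y : Fin n → ℝ | rho l y ≤ R}, f y ∂volume
      ≤ ∫⁻ y in {0} ∪ ⋃ j, S j, f y ∂volume := lintegral_mono_set hcover
    _ ≤ ∫⁻ y in ({0} : Set (Fin n → ℝ)), f y ∂volume + ∫⁻ y in ⋃ j, S j, f y ∂volume :=
        lintegral_union_le _ _ _
    _ ≤ 0 + ∑' j, ∫⁻ y in S j, f y ∂volume := by
        gcongr
        · rw [setLIntegral_measure_zero _ _ (vol_zero_singleton hn)]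
        · exact lintegral_iUnion_le _ _
    _ ≤ ∑' j, ENNReal.ofReal (cball l * c ^ θ * R ^ (θ + g)) * ENNReal.ofReal q ^ j := by
        rw [zero_add]
        exact ENNReal.tsum_le_tsum hpiece
    _ = ENNReal.ofReal (cball l * c ^ θ * R ^ (θ + g)) * (1 - ENNReal.ofReal q)⁻¹ := by
        rw [ENNReal.tsum_mul_left, ENNReal.tsum_geometric]
    _ ≤ ENNReal.ofReal (cball l * c ^ θ * (1 - q)⁻¹ * R ^ (θ + g)) := by
        have h4 : (1 - ENNReal.ofReal q)⁻¹ = ENNReal.ofReal ((1 - q)⁻¹) := by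
          rw [← ENNReal.ofReal_one, ← ENNReal.ofReal_sub _ hq0.le,
            ENNReal.ofReal_inv_of_pos (by linarith)]
        rw [h4, ← ENNReal.ofReal_mul (mul_nonneg hA0 (Real.rpow_nonneg hR.le _))]
        apply ENNReal.ofReal_le_ofReal
        apply le_of_eq
        ring

end

section
variable {n : ℕ} (l : Fin n → ℕ) (hn : 0 < n) (hl : ∀ k, 0 < l k)

include hn hl in
lemma lint_compl (θ : ℝ) (hθ : θ < 0) (hθg : θ + gnorm l < 0) :
    ∃ C : ℝ, 0 ≤ C ∧ ∀ R : ℝ, 0 < R →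
      ∫⁻ y in {y : Fin n → ℝ | R < rho l y}, ENNReal.ofReal (rho l y ^ θ)
        ≤ ENNReal.ofReal (C * R ^ (θ + gnorm l)) := by
  classical
  set g := gnorm l with hg
  set q : ℝ := (2:ℝ) ^ (θ + g) with hq
  have h20 : (0:ℝ) < 2 := by norm_num
  have hq0 : 0 < q := Real.rpow_pos_of_pos h20 _
  have hq1 : q < 1 := Real.rpow_lt_one_of_one_lt_of_neg (by norm_num) hθg
  have hA0 : 0 ≤ cball l * (2:ℝ) ^ g := mul_nonneg (cball_nonneg l) (Real.rpow_nonneg h20.le _)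
  refine ⟨cball l * (2:ℝ) ^ g * (1 - q)⁻¹,
    mul_nonneg hA0 (inv_nonneg.2 (by linarith)), fun R hR => ?_⟩
  set f : (Fin n → ℝ) → ℝ≥0∞ := fun y => ENNReal.ofReal (rho l y ^ θ) with hf
  set u : ℕ → ℝ := fun j => R * 2 ^ j with hu
  have hu0 : ∀ j, 0 < u j := fun j => by positivity
  set S : ℕ → Set (Fin n → ℝ) := fun j => {y | u j < rho l y ∧ rho l y ≤ u (j+1)} with hS
  have hcover : {y : Fin n → ℝ | R < rho l y} ⊆ ⋃ j, S j := by
    intro y hy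
    have hyR : R < rho l y := hy
    have hρ : 0 < rho l y := lt_trans hR hyR
    have hex : ∃ j : ℕ, rho l y ≤ R * 2 ^ (j+1) := by
      obtain ⟨m, hm⟩ := pow_unbounded_of_one_lt (rho l y / R) (by norm_num : (1:ℝ) < 2)
      refine ⟨m, ?_⟩
      rw [div_lt_iff₀ hR] at hm
      calc rho l y ≤ 2 ^ m * R := hm.le
        _ ≤ R * 2 ^ (m+1) := by
            rw [mul_comm]
            exact mul_le_mul_of_nonneg_left
              (pow_le_pow_right₀ (by norm_num) (by omega)) hR.le
    set j := Nat.find hex with hj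
    have hjP : rho l y ≤ R * 2 ^ (j+1) := Nat.find_spec hex
    refine mem_iUnion.2 ⟨j, ?_, hjP⟩
    rcases Nat.eq_zero_or_pos j with hj0 | hjpos
    · simp only [hj0, hu, pow_zero, mul_one]
      exact hyR
    · obtain ⟨j', hj'⟩ := Nat.exists_eq_add_of_lt hjpos
      have hnot := Nat.find_min hex (m := j') (by omega)
      push_neg at hnot
      rw [hj']
      simpa [hu] using hnot
  have hSm : ∀ j, MeasurableSet (S j) := fun j =>
    (measurableSet_lt measurable_const (measurable_rho l)).inter
      (measurableSet_le (measurable_rho l) measurable_const)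
  have hpiece : ∀ j, ∫⁻ y in S j, f y ∂volume
      ≤ ENNReal.ofReal (cball l * (2:ℝ) ^ g * R ^ (θ + g)) * ENNReal.ofReal q ^ j := by
    intro j
    have h1 : ∫⁻ y in S j, f y ∂volume ≤ ∫⁻ _ in S j, ENNReal.ofReal (u j ^ θ) ∂volume := by
      refine setLIntegral_mono' (hSm j) fun y hy => ?_
      exact ENNReal.ofReal_le_ofReal
        (Real.rpow_le_rpow_of_nonpos (hu0 j) hy.1.le hθ.le)
    rw [setLIntegral_const] at h1
    have h2 : volume (S j) ≤ ENNReal.ofReal (cball l * u (j+1) ^ g) := by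
      rw [← meas_ball l hn hl (u (j+1)) (hu0 (j+1))]
      exact measure_mono fun y hy => hy.2
    calc ∫⁻ y in S j, f y ∂volume
        ≤ ENNReal.ofReal (u j ^ θ) * ENNReal.ofReal (cball l * u (j+1) ^ g) :=
          le_trans h1 (mul_le_mul_right h2 _)
      _ = ENNReal.ofReal (u j ^ θ * (cball l * u (j+1) ^ g)) := by
          rw [← ENNReal.ofReal_mul (Real.rpow_nonneg (hu0 j).le _)]
      _ = ENNReal.ofReal (cball l * (2:ℝ) ^ g * R ^ (θ + g)) * ENNReal.ofReal q ^ j := by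
          rw [← ENNReal.ofReal_pow hq0.le,
            ← ENNReal.ofReal_mul (mul_nonneg hA0 (Real.rpow_nonneg hR.le _))]
          congr 1
          have e1 : u j ^ θ = R ^ θ * (2:ℝ) ^ (θ * (j:ℝ)) := by
            show (R * 2 ^ j) ^ θ = _
            rw [Real.mul_rpow hR.le (by positivity), ← Real.rpow_natCast (2:ℝ) j,
              ← Real.rpow_mul h20.le, mul_comm (j:ℝ) θ]
          have e2 : u (j+1) ^ g = R ^ g * ((2:ℝ) ^ g * (2:ℝ) ^ (g * (j:ℝ))) := by
            show (R * 2 ^ (j+1)) ^ g = _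
            rw [Real.mul_rpow hR.le (by positivity), ← Real.rpow_natCast (2:ℝ) (j+1),
              ← Real.rpow_mul h20.le,
              show ((j+1 : ℕ) : ℝ) * g = g + g * (j:ℝ) by push_cast; ring,
              Real.rpow_add h20]
          have e3 : q ^ j = (2:ℝ) ^ (θ * (j:ℝ)) * (2:ℝ) ^ (g * (j:ℝ)) := by
            show ((2:ℝ) ^ (θ + g)) ^ j = _
            rw [← Real.rpow_natCast ((2:ℝ) ^ (θ + g)) j, ← Real.rpow_mul h20.le, add_mul,
              Real.rpow_add h20]
          rw [e1, e2, e3, Real.rpow_add hR]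
          ring
  calc ∫⁻ y in {y : Fin n → ℝ | R < rho l y}, f y ∂volume
      ≤ ∫⁻ y in ⋃ j, S j, f y ∂volume := lintegral_mono_set hcover
    _ ≤ ∑' j, ∫⁻ y in S j, f y ∂volume := lintegral_iUnion_le _ _
    _ ≤ ∑' j, ENNReal.ofReal (cball l * (2:ℝ) ^ g * R ^ (θ + g)) * ENNReal.ofReal q ^ j :=
        ENNReal.tsum_le_tsum hpiece
    _ = ENNReal.ofReal (cball l * (2:ℝ) ^ g * R ^ (θ + g)) * (1 - ENNReal.ofReal q)⁻¹ := by
        rw [ENNReal.tsum_mul_left, ENNReal.tsum_geometric]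
    _ ≤ ENNReal.ofReal (cball l * (2:ℝ) ^ g * (1 - q)⁻¹ * R ^ (θ + g)) := by
        have h4 : (1 - ENNReal.ofReal q)⁻¹ = ENNReal.ofReal ((1 - q)⁻¹) := by
          rw [← ENNReal.ofReal_one, ← ENNReal.ofReal_sub _ hq0.le,
            ENNReal.ofReal_inv_of_pos (by linarith)]
        rw [h4, ← ENNReal.ofReal_mul (mul_nonneg hA0 (Real.rpow_nonneg hR.le _))]
        apply ENNReal.ofReal_le_ofReal
        apply le_of_eq
        ring

end

section

lemma gnorm_pos {n : ℕ} (l : Fin n → ℕ) (hn : 0 < n) (hl : ∀ k, 0 < l k) : 0 < gnorm l := by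
  have hpos : ∀ k, 0 < gam l k := fun k => by
    have h1 : (0:ℝ) < (lmax l : ℝ) := by exact_mod_cast lmax_pos l hn hl
    have h2 : (0:ℝ) < (l k : ℝ) := by exact_mod_cast hl k
    exact div_pos h1 h2
  exact Finset.sum_pos (fun k _ => hpos k) ⟨⟨0, hn⟩, Finset.mem_univ _⟩

lemma rpow_add_le_add_rpow' {a b p : ℝ} (ha : 0 ≤ a) (hb : 0 ≤ b) (hp0 : 0 ≤ p)
    (hp1 : p ≤ 1) : (a + b) ^ p ≤ a ^ p + b ^ p := by
  lift a to ℝ≥0 using ha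
  lift b to ℝ≥0 using hb
  have := NNReal.rpow_add_le_add_rpow a b hp0 hp1
  exact_mod_cast this

lemma rho_add_le {n : ℕ} (l : Fin n → ℕ) (hn : 0 < n) (hl : ∀ k, 0 < l k)
    (x y : Fin n → ℝ) : rho l (x + y) ≤ rho l x + rho l y := by
  have hL : (0:ℝ) < (lmax l : ℝ) := by exact_mod_cast lmax_pos l hn hl
  set L : ℝ := (lmax l : ℝ) with hLdef
  set p : ℝ := 2 * L with hpdef
  have hp0 : 0 < p := by positivity
  have hp1 : 1 ≤ p := by
    have : (1:ℝ) ≤ L := by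
      have := lmax_pos l hn hl
      simp only [hLdef]
      exact_mod_cast this
    nlinarith
  have key : ∀ z : Fin n → ℝ,
      rho l z = (∑ k, |(|z k| ^ ((l k : ℝ)/L))| ^ p) ^ (1/p) := by
    intro z
    rw [rho]
    congr 1
    · unfold sig
      refine Finset.sum_congr rfl fun k _ => ?_
      have h1 : (0:ℝ) ≤ |z k| ^ ((l k:ℝ)/L) := Real.rpow_nonneg (abs_nonneg _) _
      rw [abs_of_nonneg h1, ← (even_two_mul (l k)).pow_abs,
        ← Real.rpow_natCast |z k| (2 * l k), ← Real.rpow_mul (abs_nonneg _)]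
      have he : (l k:ℝ)/L * p = ((2 * l k : ℕ) : ℝ) := by
        push_cast
        field_simp
        ring
      rw [he, Real.rpow_natCast]
  have hNle : ∀ k, |(x + y) k| ^ ((l k:ℝ)/L) ≤ |x k| ^ ((l k:ℝ)/L) + |y k| ^ ((l k:ℝ)/L) := by
    intro k
    have he0 : (0:ℝ) ≤ (l k:ℝ)/L := by positivity
    have he1 : (l k:ℝ)/L ≤ 1 := by
      rw [div_le_one hL]
      exact_mod_cast Nat.cast_le.mpr (Finset.le_sup (f := l) (Finset.mem_univ k))
    calc |(x + y) k| ^ ((l k:ℝ)/L) ≤ (|x k| + |y k|) ^ ((l k:ℝ)/L) := by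
          apply Real.rpow_le_rpow (abs_nonneg _) _ he0
          exact abs_add_le _ _
      _ ≤ |x k| ^ ((l k:ℝ)/L) + |y k| ^ ((l k:ℝ)/L) :=
          rpow_add_le_add_rpow' (abs_nonneg _) (abs_nonneg _) he0 he1
  rw [key (x+y), key x, key y]
  refine le_trans ?_ (Real.Lp_add_le Finset.univ (fun k => |x k| ^ ((l k:ℝ)/L))
    (fun k => |y k| ^ ((l k:ℝ)/L)) hp1)
  apply Real.rpow_le_rpow
  · exact Finset.sum_nonneg fun k _ => by positivity
  · refine Finset.sum_le_sum fun k _ => ?_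
    apply Real.rpow_le_rpow (abs_nonneg _) _ hp0.le
    have h2 : (0:ℝ) ≤ |x k| ^ ((l k:ℝ)/L) + |y k| ^ ((l k:ℝ)/L) := by positivity
    rw [abs_of_nonneg (Real.rpow_nonneg (abs_nonneg _) _), abs_of_nonneg h2]
    exact hNle k
  · positivity

set_option maxHeartbeats 1000000 in
theorem stmt15_aux (n : ℕ) (hn : 0 < n) (l : Fin n → ℕ) (hl : ∀ k, 0 < l k)
    (ξ η : ℝ) (hξ : 0 < ξ + gnorm l) (hη : 0 < η + gnorm l) (hξη : ξ + η + gnorm l < 0) :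
    ∃ C : ℝ, 0 < C ∧ ∀ x : Fin n → ℝ,
      Integrable (fun y : Fin n → ℝ => rho l (x - y) ^ ξ * (1 + rho l y) ^ η) volume ∧
      (∫ y : Fin n → ℝ, rho l (x - y) ^ ξ * (1 + rho l y) ^ η)
        ≤ C * (1 + rho l x) ^ (ξ + η + gnorm l) := by
  have hg : 0 < gnorm l := gnorm_pos l hn hl
  have hξ0 : ξ < 0 := by linarith
  have hη0 : η < 0 := by linarith
  set s := ξ + η + gnorm l with hsdef
  obtain ⟨C₁, hC₁0, hC₁⟩ := lint_ball l hn hl ξ hξ0 hξ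
  obtain ⟨C₂, hC₂0, hC₂⟩ := lint_ball l hn hl η hη0 hη
  obtain ⟨C₃, hC₃0, hC₃⟩ := lint_compl l hn hl (ξ + η) (by linarith) (by linarith)
  have h2s : (0:ℝ) < (2:ℝ) ^ s := Real.rpow_pos_of_pos two_pos s
  have h2ξ : (0:ℝ) < (2:ℝ) ^ ξ := Real.rpow_pos_of_pos two_pos ξ
  set Ctot : ℝ := C₁/(2:ℝ)^s + C₂/(2:ℝ)^ξ + C₃ + C₃/(2:ℝ)^s + 1 with hCtot
  have hCtot0 : 0 < Ctot := by positivity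
  refine ⟨Ctot, hCtot0, fun x => ?_⟩
  set R : ℝ := 1 + rho l x with hRdef
  have hR0 : 0 < R := by have := rho_nonneg l x; simp only [hRdef]; linarith
  have hR2 : 0 < R/2 := by linarith
  set F : (Fin n → ℝ) → ℝ := fun y => rho l (x - y) ^ ξ * (1 + rho l y) ^ η with hF
  have hFmeas : Measurable F := by
    apply Measurable.mul
    · exact (((measurable_rho l).comp (measurable_const.sub measurable_id)).pow
        measurable_const)
    · exact ((measurable_const.add (measurable_rho l)).pow measurable_const)
  have hFnn : ∀ y, 0 ≤ F y := fun y => mul_nonneg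
    (Real.rpow_nonneg (rho_nonneg l _) _)
    (Real.rpow_nonneg (by have := rho_nonneg l y; linarith) _)
  -- the four dominating pieces
  set T₁ : (Fin n → ℝ) → ℝ≥0∞ := fun y => ENNReal.ofReal ((R/2) ^ η) *
    ({z : Fin n → ℝ | rho l z ≤ R/2}.indicator
      (fun z => ENNReal.ofReal (rho l z ^ ξ)) (x - y)) with hT₁
  set T₂ : (Fin n → ℝ) → ℝ≥0∞ := fun y => ENNReal.ofReal ((R/2) ^ ξ) *
    ({z : Fin n → ℝ | rho l z ≤ R}.indicator
      (fun z => ENNReal.ofReal (rho l z ^ η)) y) with hT₂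
  set T₃ : (Fin n → ℝ) → ℝ≥0∞ := fun y =>
    ({z : Fin n → ℝ | R < rho l z}.indicator
      (fun z => ENNReal.ofReal (rho l z ^ (ξ + η))) y) with hT₃
  set T₄ : (Fin n → ℝ) → ℝ≥0∞ := fun y =>
    ({z : Fin n → ℝ | R/2 < rho l z}.indicator
      (fun z => ENNReal.ofReal (rho l z ^ (ξ + η))) (x - y)) with hT₄
  have hae : ∀ᵐ y : Fin n → ℝ, y ≠ (0 : Fin n → ℝ) := by
    rw [MeasureTheory.ae_iff]
    convert vol_zero_singleton hn using 2
    ext z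
    simp
  have hdom : ∀ᵐ y : Fin n → ℝ, ENNReal.ofReal (F y) ≤ T₁ y + T₂ y + T₃ y + T₄ y := by
    filter_upwards [hae] with y hy0
    have hρy : 0 < rho l y := rho_pos_of_ne l hn hl hy0
    have htri : rho l x ≤ rho l (x - y) + rho l y := by
      have h := rho_add_le l hn hl (x - y) y
      rwa [sub_add_cancel] at h
    by_cases h1 : rho l (x - y) ≤ R/2
    · have hb : F y ≤ rho l (x - y) ^ ξ * (R/2) ^ η := by
        apply mul_le_mul_of_nonneg_left _ (Real.rpow_nonneg (rho_nonneg l _) _)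
        apply Real.rpow_le_rpow_of_nonpos hR2 _ hη0.le
        simp only [hRdef] at htri ⊢
        linarith
      have heq : T₁ y = ENNReal.ofReal (rho l (x - y) ^ ξ * (R/2) ^ η) := by
        simp only [hT₁]
        rw [Set.indicator_of_mem (by exact h1 : (x - y) ∈ {z | rho l z ≤ R/2}),
          ← ENNReal.ofReal_mul (Real.rpow_nonneg hR2.le _), mul_comm]
      calc ENNReal.ofReal (F y) ≤ T₁ y := by rw [heq]; exact ENNReal.ofReal_le_ofReal hb
        _ ≤ T₁ y + T₂ y + T₃ y + T₄ y := le_add_right (le_add_right le_self_add)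
    · push_neg at h1
      have hρxy : 0 < rho l (x - y) := lt_trans hR2 h1
      have hbξ : rho l (x - y) ^ ξ ≤ (R/2) ^ ξ :=
        Real.rpow_le_rpow_of_nonpos hR2 h1.le hξ0.le
      by_cases h2 : rho l y ≤ R
      · have hb : F y ≤ (R/2) ^ ξ * (rho l y ^ η) := by
          apply mul_le_mul hbξ _ (Real.rpow_nonneg (by linarith [rho_nonneg l y]) _)
            (Real.rpow_nonneg hR2.le _)
          exact Real.rpow_le_rpow_of_nonpos hρy (by linarith) hη0.le
        have heq : T₂ y = ENNReal.ofReal ((R/2) ^ ξ * rho l y ^ η) := by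
          simp only [hT₂]
          rw [Set.indicator_of_mem (by exact h2 : y ∈ {z | rho l z ≤ R}),
            ← ENNReal.ofReal_mul (Real.rpow_nonneg hR2.le _)]
        calc ENNReal.ofReal (F y) ≤ T₂ y := by rw [heq]; exact ENNReal.ofReal_le_ofReal hb
          _ ≤ T₁ y + T₂ y + T₃ y + T₄ y := le_add_right (le_add_right le_add_self)
      · push_neg at h2
        by_cases h3 : rho l y ≤ rho l (x - y)
        · have hb : F y ≤ rho l y ^ (ξ + η) := by
            rw [Real.rpow_add hρy]
            apply mul_le_mul
            · exact Real.rpow_le_rpow_of_nonpos hρy h3 hξ0.le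
            · exact Real.rpow_le_rpow_of_nonpos hρy (by linarith) hη0.le
            · exact Real.rpow_nonneg (by linarith [rho_nonneg l y]) _
            · exact Real.rpow_nonneg hρy.le _
          have heq : T₃ y = ENNReal.ofReal (rho l y ^ (ξ + η)) := by
            simp only [hT₃]
            rw [Set.indicator_of_mem (by exact h2 : y ∈ {z | R < rho l z})]
          calc ENNReal.ofReal (F y) ≤ T₃ y := by
                rw [heq]; exact ENNReal.ofReal_le_ofReal hb
            _ ≤ T₁ y + T₂ y + T₃ y + T₄ y := le_add_right le_add_self
        · push_neg at h3
          have hb : F y ≤ rho l (x - y) ^ (ξ + η) := by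
            rw [Real.rpow_add hρxy]
            apply mul_le_mul le_rfl
            · calc (1 + rho l y) ^ η ≤ rho l y ^ η :=
                    Real.rpow_le_rpow_of_nonpos hρy (by linarith) hη0.le
                _ ≤ rho l (x - y) ^ η :=
                    Real.rpow_le_rpow_of_nonpos hρxy h3.le hη0.le
            · exact Real.rpow_nonneg (by linarith [rho_nonneg l y]) _
            · exact Real.rpow_nonneg hρxy.le _
          have heq : T₄ y = ENNReal.ofReal (rho l (x - y) ^ (ξ + η)) := by
            simp only [hT₄]
            rw [Set.indicator_of_mem (by exact h1 : (x - y) ∈ {z | R/2 < rho l z})]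
          calc ENNReal.ofReal (F y) ≤ T₄ y := by
                rw [heq]; exact ENNReal.ofReal_le_ofReal hb
            _ ≤ T₁ y + T₂ y + T₃ y + T₄ y := le_add_self
  -- measurability of pieces
  have hsub : Measurable fun y : Fin n → ℝ => x - y := measurable_const.sub measurable_id
  have hmp := Measure.measurePreserving_sub_left (volume : Measure (Fin n → ℝ)) x
  have hind₁ : Measurable ({z : Fin n → ℝ | rho l z ≤ R/2}.indicator
      (fun z => ENNReal.ofReal (rho l z ^ ξ))) :=
    (ENNReal.measurable_ofReal.comp ((measurable_rho l).pow measurable_const)).indicator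
      (measurableSet_ball l _)
  have hind₂ : Measurable ({z : Fin n → ℝ | rho l z ≤ R}.indicator
      (fun z => ENNReal.ofReal (rho l z ^ η))) :=
    (ENNReal.measurable_ofReal.comp ((measurable_rho l).pow measurable_const)).indicator
      (measurableSet_ball l _)
  have hind₃ : Measurable ({z : Fin n → ℝ | R < rho l z}.indicator
      (fun z => ENNReal.ofReal (rho l z ^ (ξ + η)))) :=
    (ENNReal.measurable_ofReal.comp ((measurable_rho l).pow measurable_const)).indicator
      (measurableSet_lt measurable_const (measurable_rho l))
  have hind₄ : Measurable ({z : Fin n → ℝ | R/2 < rho l z}.indicator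
      (fun z => ENNReal.ofReal (rho l z ^ (ξ + η)))) :=
    (ENNReal.measurable_ofReal.comp ((measurable_rho l).pow measurable_const)).indicator
      (measurableSet_lt measurable_const (measurable_rho l))
  have hind₁' : Measurable fun y : Fin n → ℝ => ({z : Fin n → ℝ | rho l z ≤ R/2}.indicator
      (fun z => ENNReal.ofReal (rho l z ^ ξ))) (x - y) := hind₁.comp hsub
  have hind₄' : Measurable fun y : Fin n → ℝ => ({z : Fin n → ℝ | R/2 < rho l z}.indicator
      (fun z => ENNReal.ofReal (rho l z ^ (ξ + η)))) (x - y) := hind₄.comp hsub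
  -- integral bounds for the pieces
  have hi₁ : ∫⁻ y, T₁ y ≤ ENNReal.ofReal (C₁/(2:ℝ)^s * R ^ s) := by
    simp only [hT₁]
    rw [lintegral_const_mul _ hind₁']
    have hcv : ∫⁻ y, ({z : Fin n → ℝ | rho l z ≤ R/2}.indicator
        (fun z => ENNReal.ofReal (rho l z ^ ξ))) (x - y)
        = ∫⁻ z in {z : Fin n → ℝ | rho l z ≤ R/2}, ENNReal.ofReal (rho l z ^ ξ) := by
      rw [hmp.lintegral_comp hind₁, lintegral_indicator (measurableSet_ball l _)]
    rw [hcv]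
    calc ENNReal.ofReal ((R/2) ^ η) * ∫⁻ z in {z : Fin n → ℝ | rho l z ≤ R/2},
          ENNReal.ofReal (rho l z ^ ξ)
        ≤ ENNReal.ofReal ((R/2) ^ η) * ENNReal.ofReal (C₁ * (R/2) ^ (ξ + gnorm l)) :=
          mul_le_mul_right (hC₁ (R/2) hR2) _
      _ = ENNReal.ofReal ((R/2) ^ η * (C₁ * (R/2) ^ (ξ + gnorm l))) := by
          rw [← ENNReal.ofReal_mul (Real.rpow_nonneg hR2.le _)]
      _ ≤ ENNReal.ofReal (C₁/(2:ℝ)^s * R ^ s) := by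
          apply ENNReal.ofReal_le_ofReal
          apply le_of_eq
          rw [← mul_assoc, mul_comm ((R/2) ^ η) C₁, mul_assoc,
            ← Real.rpow_add hR2, Real.div_rpow hR0.le (by norm_num : (0:ℝ) ≤ 2),
            show η + (ξ + gnorm l) = s by rw [hsdef]; ring]
          ring
  have hi₂ : ∫⁻ y, T₂ y ≤ ENNReal.ofReal (C₂/(2:ℝ)^ξ * R ^ s) := by
    simp only [hT₂]
    rw [lintegral_const_mul _ hind₂, lintegral_indicator (measurableSet_ball l _)]
    calc ENNReal.ofReal ((R/2) ^ ξ) * ∫⁻ z in {z : Fin n → ℝ | rho l z ≤ R},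
          ENNReal.ofReal (rho l z ^ η)
        ≤ ENNReal.ofReal ((R/2) ^ ξ) * ENNReal.ofReal (C₂ * R ^ (η + gnorm l)) :=
          mul_le_mul_right (hC₂ R hR0) _
      _ = ENNReal.ofReal ((R/2) ^ ξ * (C₂ * R ^ (η + gnorm l))) := by
          rw [← ENNReal.ofReal_mul (Real.rpow_nonneg hR2.le _)]
      _ ≤ ENNReal.ofReal (C₂/(2:ℝ)^ξ * R ^ s) := by
          apply ENNReal.ofReal_le_ofReal
          apply le_of_eq
          rw [Real.div_rpow hR0.le (by norm_num : (0:ℝ) ≤ 2),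
            show (C₂/(2:ℝ)^ξ * R ^ s) = C₂ * (R ^ ξ * R ^ (η + gnorm l)) / (2:ℝ)^ξ by
              rw [← Real.rpow_add hR0, show ξ + (η + gnorm l) = s by rw [hsdef]; ring]
              ring]
          ring
  have hi₃ : ∫⁻ y, T₃ y ≤ ENNReal.ofReal (C₃ * R ^ s) := by
    simp only [hT₃]
    rw [lintegral_indicator (measurableSet_lt measurable_const (measurable_rho l))]
    exact hC₃ R hR0
  have hi₄ : ∫⁻ y, T₄ y ≤ ENNReal.ofReal (C₃/(2:ℝ)^s * R ^ s) := by
    simp only [hT₄]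
    have hcv : ∫⁻ y, ({z : Fin n → ℝ | R/2 < rho l z}.indicator
        (fun z => ENNReal.ofReal (rho l z ^ (ξ + η)))) (x - y)
        = ∫⁻ z in {z : Fin n → ℝ | R/2 < rho l z}, ENNReal.ofReal (rho l z ^ (ξ + η)) := by
      rw [hmp.lintegral_comp hind₄,
        lintegral_indicator (measurableSet_lt measurable_const (measurable_rho l))]
    rw [hcv]
    calc ∫⁻ z in {z : Fin n → ℝ | R/2 < rho l z}, ENNReal.ofReal (rho l z ^ (ξ + η))
        ≤ ENNReal.ofReal (C₃ * (R/2) ^ (ξ + η + gnorm l)) := hC₃ (R/2) hR2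
      _ ≤ ENNReal.ofReal (C₃/(2:ℝ)^s * R ^ s) := by
          apply ENNReal.ofReal_le_ofReal
          apply le_of_eq
          rw [← hsdef, Real.div_rpow hR0.le (by norm_num : (0:ℝ) ≤ 2)]
          ring
  have key : ∫⁻ y, ENNReal.ofReal (F y) ≤ ENNReal.ofReal (Ctot * R ^ s) := by
    calc ∫⁻ y, ENNReal.ofReal (F y) ≤ ∫⁻ y, (T₁ y + T₂ y + T₃ y + T₄ y) :=
          lintegral_mono_ae hdom
      _ = (∫⁻ y, T₁ y) + (∫⁻ y, T₂ y) + (∫⁻ y, T₃ y) + (∫⁻ y, T₄ y) := by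
          rw [lintegral_add_right _ hind₄', lintegral_add_right _ hind₃,
            lintegral_add_right _ (show Measurable T₂ from measurable_const.mul hind₂)]
      _ ≤ ENNReal.ofReal (C₁/(2:ℝ)^s * R ^ s) + ENNReal.ofReal (C₂/(2:ℝ)^ξ * R ^ s)
          + ENNReal.ofReal (C₃ * R ^ s) + ENNReal.ofReal (C₃/(2:ℝ)^s * R ^ s) := by
          gcongr
      _ ≤ ENNReal.ofReal (Ctot * R ^ s) := by
          rw [← ENNReal.ofReal_add (by positivity) (by positivity),
            ← ENNReal.ofReal_add (by positivity) (by positivity),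
            ← ENNReal.ofReal_add (by positivity) (by positivity)]
          apply ENNReal.ofReal_le_ofReal
          have hRs : 0 ≤ R ^ s := Real.rpow_nonneg hR0.le _
          nlinarith [hRs]
  constructor
  · refine ⟨hFmeas.aestronglyMeasurable, ?_⟩
    rw [hasFiniteIntegral_iff_ofReal (Filter.Eventually.of_forall hFnn)]
    exact lt_of_le_of_lt key ENNReal.ofReal_lt_top
  · rw [integral_eq_lintegral_of_nonneg_ae (Filter.Eventually.of_forall hFnn)
      hFmeas.aestronglyMeasurable]
    exact ENNReal.toReal_le_of_le_ofReal
      (mul_nonneg hCtot0.le (Real.rpow_nonneg hR0.le _)) key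

end

/-- Lemma 6.1: if `ξ+‖γ‖ > 0`, `η+‖γ‖ > 0` and `ξ+η+‖γ‖ < 0` then
`K(x,ξ,η) = ∫ ρ(x-y)^ξ (1+ρ(y))^η dy` is finite with
`K(x,ξ,η) ≤ C(ξ,η,ℓ̲)(1+ρ(x))^{ξ+η+‖γ‖}`. -/
theorem stmt15 (n : ℕ) (hn : 0 < n) (l : Fin n → ℕ) (hl : ∀ k, 0 < l k)
    (ξ η : ℝ) (hξ : 0 < ξ + gnorm l) (hη : 0 < η + gnorm l) (hξη : ξ + η + gnorm l < 0) :
    ∃ C : ℝ, 0 < C ∧ ∀ x : Fin n → ℝ,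
      Integrable (fun y : Fin n → ℝ => rho l (x - y) ^ ξ * (1 + rho l y) ^ η) volume ∧
      (∫ y : Fin n → ℝ, rho l (x - y) ^ ξ * (1 + rho l y) ^ η)
        ≤ C * (1 + rho l x) ^ (ξ + η + gnorm l) :=
  stmt15_aux n hn l hl ξ η hξ hη hξη

end Semielliptic
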